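/- Let a < b be real numbers and let f : ℝ → ℝ be a strictly increasing homeomorphism with f(a) = a, f(b) = b, and x < f(x) for every x ∈ (a,b). Then f restricts to a homeomorphism of the open interval (a,b), the resulting ℤ-action on (a,b) given by n • x = fⁿ(x) is free and properly discontinuous, and for every x ∈ (a,b), fⁿ(x) → b as n → +∞ and fⁿ(x) → a as n → −∞. -/

import Mathlib

open Filter

/-- If `f` is a strictly increasing homeomorphism of `ℝ` fixing `a < b` with
`x < f x` on `(a,b)`, then `f` restricts to a homeomorphism of `(a,b)`, the
induced `ℤ`-action on `(a,b)` is free and properly discontinuous, and for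
`x ∈ (a,b)` one has `fⁿ(x) → b` as `n → +∞` and `fⁿ(x) → a` as `n → −∞`. -/
theorem interval_action_free_properly_discontinuous (a b : ℝ) (hab : a < b)
    (f : ℝ ≃ₜ ℝ) (hmono : StrictMono f) (ha : f a = a) (hb : f b = b)
    (hf : ∀ x ∈ Set.Ioo a b, x < f x) :
    (⇑f) '' Set.Ioo a b = Set.Ioo a b ∧
    (∀ (n : ℤ), ∀ x ∈ Set.Ioo a b, (f.toEquiv ^ n) x = x → n = 0) ∧
    (∀ K L : Set ℝ, K ⊆ Set.Ioo a b → L ⊆ Set.Ioo a b →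
        IsCompact K → IsCompact L →
        {n : ℤ | ((⇑(f.toEquiv ^ n)) '' K ∩ L).Nonempty}.Finite) ∧
    (∀ x ∈ Set.Ioo a b,
        Tendsto (fun n : ℤ => (f.toEquiv ^ n) x) atTop (nhds b) ∧
        Tendsto (fun n : ℤ => (f.toEquiv ^ n) x) atBot (nhds a)) := by
  set e := f.toEquiv with he
  have hsa : f.symm a = a := by nth_rewrite 1 [← ha]; exact f.symm_apply_apply a
  have hsb : f.symm b = b := by nth_rewrite 1 [← hb]; exact f.symm_apply_apply b
  have hsmono : StrictMono ⇑f.symm := fun x y h => by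
    rw [← hmono.lt_iff_lt]; simpa using h
  -- step lemmas
  have step2 : ∀ (n : ℤ) (x : ℝ), (e ^ (n + 1)) x = f ((e ^ n) x) := by
    intro n x; rw [add_comm, zpow_add, zpow_one]; rfl
  have nstep : ∀ (n : ℤ) (x : ℝ), (e ^ (n - 1)) x = f.symm ((e ^ n) x) := by
    intro n x; rw [sub_eq_add_neg, add_comm, zpow_add, zpow_neg_one]; rfl
  have pow_a : ∀ n : ℤ, (e ^ n) a = a := by
    intro n
    induction n using Int.induction_on with
    | zero => rfl
    | succ n ih => rw [step2, ih]; exact ha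
    | pred n ih => rw [show (-(n:ℤ) - 1) = (-(n:ℤ)) - 1 by ring, nstep, ih]; exact hsa
  have pow_b : ∀ n : ℤ, (e ^ n) b = b := by
    intro n
    induction n using Int.induction_on with
    | zero => rfl
    | succ n ih => rw [step2, ih]; exact hb
    | pred n ih => rw [show (-(n:ℤ) - 1) = (-(n:ℤ)) - 1 by ring, nstep, ih]; exact hsb
  have pow_mono : ∀ n : ℤ, StrictMono ⇑(e ^ n) := by
    intro n
    induction n using Int.induction_on with
    | zero => intro x y h; simpa using h
    | succ n ih => intro x y h; rw [step2, step2]; exact hmono (ih h)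
    | pred n ih =>
        intro x y h
        rw [show (-(n:ℤ) - 1) = (-(n:ℤ)) - 1 by ring, nstep, nstep]
        exact hsmono (ih h)
  have pow_mem : ∀ n : ℤ, ∀ x ∈ Set.Ioo a b, (e ^ n) x ∈ Set.Ioo a b := by
    intro n x hx
    constructor
    · have := pow_mono n hx.1; rwa [pow_a] at this
    · have := pow_mono n hx.2; rwa [pow_b] at this
  have orbit : ∀ x ∈ Set.Ioo a b, StrictMono (fun n : ℤ => (e ^ n) x) := by
    intro x hx
    apply strictMono_int_of_lt_succ
    intro n
    have h1 : (e ^ n) x ∈ Set.Ioo a b := pow_mem n x hx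
    calc (e ^ n) x < f ((e ^ n) x) := hf _ h1
      _ = (e ^ (n + 1)) x := (step2 n x).symm
  have pow_zero_apply : ∀ x : ℝ, (e ^ (0 : ℤ)) x = x := by
    intro x; rw [zpow_zero]; rfl
  -- Part 1: image
  have himg : ⇑f '' Set.Ioo a b = Set.Ioo a b := by
    ext y
    simp only [Set.mem_image, Set.mem_Ioo]
    constructor
    · rintro ⟨x, ⟨hx1, hx2⟩, rfl⟩
      exact ⟨ha ▸ hmono hx1, hb ▸ hmono hx2⟩
    · rintro ⟨hy1, hy2⟩
      exact ⟨f.symm y, ⟨hsa ▸ hsmono hy1, hsb ▸ hsmono hy2⟩, f.apply_symm_apply y⟩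
  -- Part 4: tendsto
  have htend : ∀ x ∈ Set.Ioo a b,
      Tendsto (fun n : ℤ => (e ^ n) x) atTop (nhds b) ∧
      Tendsto (fun n : ℤ => (e ^ n) x) atBot (nhds a) := by
    intro x hx
    set φ : ℤ → ℝ := fun n => (e ^ n) x with hφ
    have hmonoφ : Monotone φ := (orbit x hx).monotone
    have hbddA : BddAbove (Set.range φ) :=
      ⟨b, by rintro _ ⟨n, rfl⟩; exact (pow_mem n x hx).2.le⟩
    have hbddB : BddBelow (Set.range φ) :=
      ⟨a, by rintro _ ⟨n, rfl⟩; exact (pow_mem n x hx).1.le⟩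
    have hT : Tendsto φ atTop (nhds (⨆ n, φ n)) := tendsto_atTop_ciSup hmonoφ hbddA
    have hB : Tendsto φ atBot (nhds (⨅ n, φ n)) := tendsto_atBot_ciInf hmonoφ hbddB
    have hφ0 : φ 0 = x := pow_zero_apply x
    have hsup : (⨆ n, φ n) = b := by
      set L := ⨆ n, φ n with hL
      have hLle : L ≤ b := ciSup_le fun n => (pow_mem n x hx).2.le
      have hLa : a < L := lt_of_lt_of_le hx.1 (hφ0 ▸ le_ciSup hbddA (0 : ℤ))
      by_contra h
      have hLmem : L ∈ Set.Ioo a b := ⟨hLa, lt_of_le_of_ne hLle h⟩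
      have hshift : Tendsto (fun n : ℤ => φ (n + 1)) atTop (nhds L) :=
        hT.comp (tendsto_atTop_add_const_right atTop 1 tendsto_id)
      have h2 : Tendsto (fun n : ℤ => f (φ n)) atTop (nhds (f L)) :=
        (f.continuous.tendsto L).comp hT
      have heq : (fun n : ℤ => φ (n + 1)) = fun n : ℤ => f (φ n) :=
        funext fun n => step2 n x
      rw [heq] at hshift
      have : f L = L := tendsto_nhds_unique h2 hshift
      exact absurd this.symm (ne_of_lt (hf L hLmem))
    have hinf : (⨅ n, φ n) = a := by
      set M := ⨅ n, φ n with hM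
      have hMge : a ≤ M := le_ciInf fun n => (pow_mem n x hx).1.le
      have hMb : M < b := lt_of_le_of_lt (hφ0 ▸ ciInf_le hbddB (0 : ℤ)) hx.2
      by_contra h
      have hMmem : M ∈ Set.Ioo a b := ⟨lt_of_le_of_ne hMge (Ne.symm h), hMb⟩
      have hshift : Tendsto (fun n : ℤ => φ (n - 1)) atBot (nhds M) :=
        hB.comp (tendsto_atBot_add_const_right atBot (-1) tendsto_id)
      have h2 : Tendsto (fun n : ℤ => f.symm (φ n)) atBot (nhds (f.symm M)) :=
        (f.symm.continuous.tendsto M).comp hB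
      have heq : (fun n : ℤ => φ (n - 1)) = fun n : ℤ => f.symm (φ n) :=
        funext fun n => nstep n x
      rw [heq] at hshift
      have hfix : f.symm M = M := tendsto_nhds_unique h2 hshift
      have : f M = M := by
        conv_lhs => rw [← hfix]
        exact f.apply_symm_apply M
      exact absurd this.symm (ne_of_lt (hf M hMmem))
    exact ⟨hsup ▸ hT, hinf ▸ hB⟩
  refine ⟨himg, ?_, ?_, htend⟩
  -- Part 2: free
  · intro n x hx hfix
    have hinj := (orbit x hx).injective
    apply hinj
    show (e ^ n) x = (e ^ (0 : ℤ)) x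
    rw [pow_zero_apply, hfix]
  -- Part 3: properly discontinuous
  · intro K L hK hL hKc hLc
    rcases K.eq_empty_or_nonempty with rfl | hKne
    · apply Set.Finite.subset (Set.finite_empty)
      rintro n ⟨y, ⟨x, hx, rfl⟩, -⟩
      exact hx
    rcases L.eq_empty_or_nonempty with rfl | hLne
    · apply Set.Finite.subset (Set.finite_empty)
      rintro n ⟨y, -, hy⟩
      exact hy
    have hcK : sInf K ∈ K := hKc.sInf_mem hKne
    have hdK : sSup K ∈ K := hKc.sSup_mem hKne
    have hcL : sInf L ∈ L := hLc.sInf_mem hLne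
    have hdL : sSup L ∈ L := hLc.sSup_mem hLne
    have h1 := (htend (sInf K) (hK hcK)).1
    have h2 := (htend (sSup K) (hK hdK)).2
    have hev1 : ∀ᶠ n : ℤ in atTop, sSup L < (e ^ n) (sInf K) :=
      h1.eventually (lt_mem_nhds (hL hdL).2)
    have hev2 : ∀ᶠ n : ℤ in atBot, (e ^ n) (sSup K) < sInf L :=
      h2.eventually (gt_mem_nhds (hL hcL).1)
    obtain ⟨N, hN⟩ := eventually_atTop.mp hev1
    obtain ⟨M, hM⟩ := eventually_atBot.mp hev2
    apply (Set.finite_Ioo M N).subset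
    rintro n ⟨y, ⟨x, hxK, rfl⟩, hyL⟩
    constructor
    · by_contra h
      push_neg at h
      have h' := hM n h
      have hx_le : (e ^ n) x ≤ (e ^ n) (sSup K) :=
        (pow_mono n).monotone (le_csSup hKc.bddAbove hxK)
      exact absurd (csInf_le hLc.bddBelow hyL)
        (not_le.mpr (lt_of_le_of_lt hx_le h'))
    · by_contra h
      push_neg at h
      have h' := hN n h
      have hx_ge : (e ^ n) (sInf K) ≤ (e ^ n) x :=
        (pow_mono n).monotone (csInf_le hKc.bddBelow hxK)
      exact absurd (le_csSup hLc.bddAbove hyL)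
        (not_le.mpr (lt_of_lt_of_le h' hx_ge))
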